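/- Let k be a natural number. Suppose ∏_{i∈I} R^∞_i ≠ ∅ and that for every player j the induction hypothesis holds: R^k_j|_{S_j} = S_j^{k+1}. Then for every player i, the projection of R^{k+1}_i to S_i is contained in S_i^{k+2}. -/
import Mathlib


open Finset

section StrategicBeliefModel

variable {I : Type} [Fintype I] [DecidableEq I]
variable (S : I → Type) [∀ i, Fintype (S i)]
variable (T : I → Type)
variable (pay : ∀ i : I, (∀ j : I, S j) → ℝ)
variable (P : ∀ i : I, T i → Set ((∀ j : {j : I // j ≠ i}, S j.1) × (∀ j : {j : I // j ≠ i}, T j.1)))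

/-- Combine player `i`'s strategy `si` with a profile `sm` of the other players'
strategies into a full strategy profile. -/
def combine (i : I) (si : S i) (sm : ∀ j : {j : I // j ≠ i}, S j.1) : ∀ j, S j :=
  fun j => if h : j = i then cast (congrArg S h.symm) si else sm ⟨j, h⟩

/-- Player `i`'s payoff when playing `si` against the others' profile `sm`. -/
def payoffAgainst (i : I) (si : S i) (sm : ∀ j : {j : I // j ≠ i}, S j.1) : ℝ :=
  pay i (combine S i si sm)

/-- Projection of `P i ti` (a set of strategy–type profiles of the opponents)
to the opponents' strategy profiles: `P_i[t_i]|_{S_{-i}}`. -/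
def projPS (i : I) (ti : T i) : Set (∀ j : {j : I // j ≠ i}, S j.1) :=
  {sm | ∃ tm, (sm, tm) ∈ P i ti}

/-- The pair `(si, ti)` is rational: `si` is a best reply against every
opponents' strategy profile deemed possible by `ti`. -/
def rationalPair (i : I) (si : S i) (ti : T i) : Prop :=
  ∀ s : S i, ∀ sm ∈ projPS S T P i ti,
    payoffAgainst S pay i si sm ≥ payoffAgainst S pay i s sm

/-- The sets `R^m_i` (rationality and `m`-th order assumption of rationality). -/
def Rlev : ℕ → ∀ i : I, Set (S i × T i)
  | 0, i => {p | rationalPair S T pay P i p.1 p.2}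
  | (m+1), i =>
      Rlev m i ∩
        {p | P i p.2 = {q | ∀ j : {j : I // j ≠ i}, (q.1 j, q.2 j) ∈ Rlev m j.1}}

/-- `R^∞_i = ⋂_m R^m_i`. -/
def Rinf (i : I) : Set (S i × T i) := ⋂ m, Rlev S T pay P m i

/-- `si` is admissible with respect to the product set `SBar × SBarm`:
it belongs to `SBar` and no mixed strategy supported on `SBar` weakly dominates
it over `SBarm`. -/
def admissible (i : I) (SBar : Set (S i)) (SBarm : Set (∀ j : {j : I // j ≠ i}, S j.1))
    (si : S i) : Prop :=
  si ∈ SBar ∧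
    ¬ ∃ σ : S i → ℝ,
        (∀ s, 0 ≤ σ s) ∧ (∀ s, σ s ≠ 0 → s ∈ SBar) ∧ (∑ s, σ s) = 1 ∧
        (∀ sm ∈ SBarm,
          (∑ s, σ s * payoffAgainst S pay i s sm) ≥ payoffAgainst S pay i si sm) ∧
        (∃ sm ∈ SBarm,
          (∑ s, σ s * payoffAgainst S pay i s sm) > payoffAgainst S pay i si sm)

/-- The sets `S_i^m` of `m`-admissible strategies. -/
def Slev : ℕ → ∀ i : I, Set (S i)
  | 0, _ => Set.univ
  | (m+1), i =>
      {si | si ∈ Slev m i ∧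
        admissible S pay i (Slev m i) {sm | ∀ j : {j : I // j ≠ i}, sm j ∈ Slev m j.1} si}

/-- `S_i^∞ = ⋂_m S_i^m`, the iteratively admissible strategies. -/
def Sinf (i : I) : Set (S i) := ⋂ m, Slev S pay m i

/-- The model is rationality-complete. -/
def RatComplete : Prop :=
  ∀ (i : I) (SBar : Set (S i)) (SBarm : Set (∀ j : {j : I // j ≠ i}, S j.1)) (sstar : S i),
    admissible S pay i SBar SBarm sstar →
    ∃ ti : T i, ∀ si ∈ SBar, ∀ sm ∈ projPS S T P i ti, sm ∈ SBarm →
      payoffAgainst S pay i sstar sm ≥ payoffAgainst S pay i si sm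

/-- `t_j ∈ P^1_i[t_i]` : one-step unfolding. -/
def PReachOne (i j : I) (ti : T i) (tj : T j) : Prop :=
  ∃ h : j ≠ i, ∃ p ∈ P i ti, p.2 ⟨j, h⟩ = tj

/-- `t_j ∈ P^m_i[t_i]` : `m`-step unfolding (trivial at `m = 0`). -/
def PReach : ℕ → ∀ i j : I, T i → T j → Prop
  | 0, _, _, _, _ => True
  | 1, i, j, ti, tj => PReachOne S T P i j ti tj
  | (m+2), i, j, ti, tj =>
      ∃ (k : I) (tk : T k), PReach (m+1) i k ti tk ∧ PReachOne S T P k j tk tj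

/-- `(γ, m)` is a condition of the forcing poset `𝒫`. -/
def inP (γ : ∀ i, S i × T i) (m : ℕ) : Prop :=
  (∀ i, rationalPair S T pay P i (γ i).1 (γ i).2) ∧
    ∀ i j, PReach S T P m i j (γ i).2 (γ j).2

/-- `(γ, m)` is a condition of `δ`. -/
def inDelta (γ : ∀ i, S i × T i) (m : ℕ) : Prop :=
  ∀ i, γ i ∈ Rlev S T pay P m i

/-- `(γ, m)` is a condition of the generic set `𝒢`. -/
def inG (γ : ∀ i, S i × T i) (m : ℕ) : Prop :=
  inDelta S T pay P γ m ∧ ∀ (k : ℕ) (i : I), γ i ∈ Rlev S T pay P k i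

/-- induction step, first inclusion: if `∏ᵢ R^∞_i ≠ ∅` and
`R^k_j|_{S_j} = S_j^(k+1)` for every `j`, then `R^(k+1)_i|_{S_i} ⊆ S_i^(k+2)`. -/
theorem stmt4 [Nonempty I] [∀ i, Nonempty (S i)] [∀ i, Nonempty (T i)]
    (hP : ∀ (i : I) (ti : T i), (P i ti).Nonempty)
    (k : ℕ)
    (hne : ∃ γ : ∀ i, S i × T i, ∀ i, γ i ∈ Rinf S T pay P i)
    (hIH : ∀ j : I, Prod.fst '' Rlev S T pay P k j = Slev S pay (k + 1) j) :
    ∀ i : I, Prod.fst '' Rlev S T pay P (k + 1) i ⊆ Slev S pay (k + 2) i := by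
  have antitone : ∀ m (i : I), Rlev S T pay P m i ⊆ Rlev S T pay P 0 i := by
    intro m
    induction m with
    | zero => intro i; exact subset_rfl
    | succ m ih => intro i p hp; exact ih i hp.1
  intro i p hp
  obtain ⟨⟨si, ti⟩, hmem, rfl⟩ := hp
  obtain ⟨hRk, hPeq⟩ := hmem
  have hsi : si ∈ Slev S pay (k + 1) i := by
    rw [← hIH i]; exact ⟨(si, ti), hRk, rfl⟩
  have hrat : rationalPair S T pay P i si ti := antitone k i hRk
  refine ⟨hsi, hsi, ?_⟩
  rintro ⟨σ, hσ0, _, hσ1, hge, sm, hsmB, hlt⟩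
  -- sm belongs to projPS
  have hsmP : sm ∈ projPS S T P i ti := by
    have hch : ∀ j : {j : I // j ≠ i}, ∃ tj : T j.1, (sm j, tj) ∈ Rlev S T pay P k j.1 := by
      intro j
      have : sm j ∈ Prod.fst '' Rlev S T pay P k j.1 := (hIH j.1) ▸ hsmB j
      obtain ⟨⟨s', t'⟩, hmem', heq⟩ := this
      exact ⟨t', show _ ∈ _ from (heq : s' = sm j) ▸ hmem'⟩
    choose tm htm using hch
    refine ⟨tm, ?_⟩
    rw [hPeq]
    exact htm
  -- si is a best reply against sm, contradicting the strict domination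
  have hle : (∑ s, σ s * payoffAgainst S pay i s sm) ≤ payoffAgainst S pay i si sm := by
    calc (∑ s, σ s * payoffAgainst S pay i s sm)
        ≤ ∑ s, σ s * payoffAgainst S pay i si sm := by
          apply Finset.sum_le_sum
          intro s _
          exact mul_le_mul_of_nonneg_left (hrat s sm hsmP) (hσ0 s)
      _ = payoffAgainst S pay i si sm := by rw [← Finset.sum_mul, hσ1, one_mul]
  exact absurd hlt (not_lt.2 hle)

end StrategicBeliefModel
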